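/- Let n ≥ 2 and let (C, C̄) be an equitable 2-partition of H(n,q) with quotient matrix S satisfying S₁₁ − S₂₁ = (q−1)n − 2q. Suppose there exist α, β ∈ 𝒜 such that the set of essential coordinates of (χ_C)_n^α differs from the set of essential coordinates of (χ_C)_n^β. Then for every vertex x ∈ 𝒜^n, 2·|{γ ∈ 𝒜 : the vertex obtained from x by replacing its n-th coordinate by γ lies in C}| = S₂₁, and 2·|{γ ∈ 𝒜 : the vertex obtained from x by replacing its n-th coordinate by γ lies in C̄}| = S₁₂; that is, every maximal clique of H(n,q) consisting of pairwise n-adjacent vertices contains exactly S₂₁/2 vertices of C and S₁₂/2 vertices of C̄. -/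

import Mathlib

set_option linter.unusedSectionVars false

open Finset

section Aux
variable {𝒜 : Type*} [Fintype 𝒜] [DecidableEq 𝒜]

/-- Sum of `h` over the neighbors of `y` in the Hamming graph, in "pair" form. -/
noncomputable def nbrSum (N : ℕ) (h : (Fin N → 𝒜) → ℝ) (y : Fin N → 𝒜) : ℝ :=
  ∑ i : Fin N, ∑ b : 𝒜, if b = y i then 0 else h (Function.update y i b)

lemma sum_ite_eq_sub {ι : Type*} [Fintype ι] [DecidableEq ι] (i : ι) (g : ι → ℝ) (A : ℝ) :
    ∑ j, (if j = i then A else g j) = A - g i + ∑ j, g j := by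
  have : ∀ j : ι, (if j = i then A else g j) = (if j = i then A - g j else 0) + g j := by
    intro j; by_cases hj : j = i <;> simp [hj]
  rw [Finset.sum_congr rfl fun j _ => this j, Finset.sum_add_distrib,
    Finset.sum_ite_eq' Finset.univ i (fun j => A - g j)]
  simp

lemma nbrSum_eq_sub (N : ℕ) (h : (Fin N → 𝒜) → ℝ) (y : Fin N → 𝒜) :
    nbrSum N h y = ∑ i : Fin N, ((∑ b : 𝒜, h (Function.update y i b)) - h y) := by
  unfold nbrSum
  refine Finset.sum_congr rfl fun i _ => ?_
  rw [sum_ite_eq_sub (y i) (fun b => h (Function.update y i b)) 0]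
  rw [Function.update_eq_self]
  ring

lemma hammingDist_update_one {N : ℕ} (y : Fin N → 𝒜) (i : Fin N) (b : 𝒜) (hb : b ≠ y i) :
    hammingDist y (Function.update y i b) = 1 := by
  unfold hammingDist
  rw [Finset.card_eq_one]
  refine ⟨i, ?_⟩
  ext j
  simp only [Finset.mem_filter, Finset.mem_univ, true_and, Finset.mem_singleton]
  constructor
  · intro hj
    by_contra hji
    rw [Function.update_of_ne hji] at hj
    exact hj rfl
  · intro hj; subst hj; rw [Function.update_self]; exact fun h => hb h.symm

lemma ham_one_iff {N : ℕ} (y z : Fin N → 𝒜) :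
    hammingDist y z = 1 ↔ ∃ i b, b ≠ y i ∧ z = Function.update y i b := by
  constructor
  · intro hz
    unfold hammingDist at hz
    rw [Finset.card_eq_one] at hz
    obtain ⟨i0, hi⟩ := hz
    have hmem : ∀ j, (y j ≠ z j) ↔ j = i0 := by
      intro j
      constructor
      · intro hj
        have : j ∈ Finset.filter (fun k => y k ≠ z k) Finset.univ := by simp [hj]
        rw [hi] at this; simpa using this
      · intro hj; subst hj
        have : j ∈ Finset.filter (fun k => y k ≠ z k) Finset.univ := by
          rw [hi]; simp
        simpa using this
    refine ⟨i0, z i0, fun h => ((hmem i0).2 rfl) h.symm, ?_⟩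
    funext j
    by_cases hj : j = i0
    · subst hj; rw [Function.update_self]
    · rw [Function.update_of_ne hj]
      by_contra hne
      exact hj ((hmem j).1 fun h => hne h.symm)
  · rintro ⟨i, b, hb, rfl⟩
    exact hammingDist_update_one y i b hb

lemma update_inj {N : ℕ} (y : Fin N → 𝒜) {i j : Fin N} {b c : 𝒜} (hb : b ≠ y i) (hc : c ≠ y j)
    (h : Function.update y i b = Function.update y j c) : i = j ∧ b = c := by
  have hij : i = j := by
    by_contra hij
    have := congrFun h i
    rw [Function.update_self, Function.update_of_ne (fun hh => hij hh)] at this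
    exact hb this
  subst hij
  refine ⟨rfl, ?_⟩
  have := congrFun h i
  rwa [Function.update_self, Function.update_self] at this

/-- `nbrSum` really is the sum over the Hamming-neighbors. -/
lemma nbrSum_eq_nbhd {N : ℕ} (h : (Fin N → 𝒜) → ℝ) (y : Fin N → 𝒜) :
    nbrSum N h y = ∑ z ∈ Finset.univ.filter (fun z => hammingDist y z = 1), h z := by
  unfold nbrSum
  have step1 : (∑ i : Fin N, ∑ b : 𝒜, if b = y i then 0 else h (Function.update y i b))
      = ∑ p ∈ (Finset.univ.filter fun p : Fin N × 𝒜 => ¬ p.2 = y p.1),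
          h (Function.update y p.1 p.2) := by
    rw [Finset.sum_filter, ← Finset.univ_product_univ, Finset.sum_product]
    refine Finset.sum_congr rfl fun i _ => Finset.sum_congr rfl fun b _ => ?_
    by_cases hb : b = y i <;> simp [hb]
  rw [step1]
  refine Finset.sum_bij (fun p _ => Function.update y p.1 p.2) ?_ ?_ ?_ ?_
  · intro p hp
    simp only [Finset.mem_filter, Finset.mem_univ, true_and] at hp ⊢
    exact hammingDist_update_one y p.1 p.2 hp
  · intro p hp p' hp' hpe
    simp only [Finset.mem_filter, Finset.mem_univ, true_and] at hp hp'
    obtain ⟨h1, h2⟩ := update_inj y hp hp' hpe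
    exact Prod.ext h1 h2
  · intro z hz
    simp only [Finset.mem_filter, Finset.mem_univ, true_and] at hz
    obtain ⟨i, b, hb, rfl⟩ := (ham_one_iff y z).1 hz
    exact ⟨(i, b), by simpa using hb, rfl⟩
  · intro p hp; rfl

lemma nbrSum_sub {N : ℕ} (h g : (Fin N → 𝒜) → ℝ) (y : Fin N → 𝒜) :
    nbrSum N (fun z => h z - g z) y = nbrSum N h y - nbrSum N g y := by
  simp only [nbrSum_eq_nbhd, Finset.sum_sub_distrib]

lemma nbrSum_finsum {N : ℕ} {ι : Type*} (s : Finset ι) (f : ι → (Fin N → 𝒜) → ℝ)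
    (y : Fin N → 𝒜) :
    nbrSum N (fun z => ∑ a ∈ s, f a z) y = ∑ a ∈ s, nbrSum N (f a) y := by
  simp only [nbrSum_eq_nbhd]
  rw [Finset.sum_comm]

lemma nbrSum_congr {N : ℕ} {h g : (Fin N → 𝒜) → ℝ} (he : ∀ z, h z = g z) (y : Fin N → 𝒜) :
    nbrSum N h y = nbrSum N g y := by
  have : h = g := funext he
  rw [this]

/-- `nbrSum` of an "affine" function: constant plus sum of one-coordinate functions. -/
lemma nbrSum_affine {N : ℕ} (K : ℝ) (Φ : Fin N → 𝒜 → ℝ) (y : Fin N → 𝒜) :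
    nbrSum N (fun z => K + ∑ j, Φ j (z j)) y
      = ((Fintype.card 𝒜 : ℝ) - 1) * N * K
        + (((Fintype.card 𝒜 : ℝ) - 1) * N - (Fintype.card 𝒜 : ℝ)) * (∑ j, Φ j (y j))
        + ∑ j, ∑ b, Φ j b := by
  set Q : ℝ := (Fintype.card 𝒜 : ℝ) with hQ
  rw [nbrSum_eq_sub]
  have inner : ∀ i : Fin N,
      (∑ b : 𝒜, (K + ∑ j, Φ j (Function.update y i b j)))
        = Q * K + Q * (∑ j, Φ j (y j)) - Q * Φ i (y i) + ∑ b, Φ i b := by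
    intro i
    have hpt : ∀ b : 𝒜, (K + ∑ j, Φ j (Function.update y i b j))
        = (K + ((∑ j, Φ j (y j)) - Φ i (y i))) + Φ i b := by
      intro b
      have hptj : ∀ j : Fin N, Φ j (Function.update y i b j)
          = if j = i then Φ i b else Φ j (y j) := by
        intro j
        by_cases hj : j = i
        · subst hj; rw [Function.update_self]; simp
        · rw [Function.update_of_ne hj]; simp [hj]
      rw [Finset.sum_congr rfl fun j _ => hptj j, sum_ite_eq_sub i (fun j => Φ j (y j)) (Φ i b)]
      ring
    rw [Finset.sum_congr rfl fun b _ => hpt b, Finset.sum_add_distrib, Finset.sum_const]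
    simp only [Finset.card_univ, nsmul_eq_mul]
    ring
  rw [Finset.sum_congr rfl fun i _ => by rw [inner i]]
  have houter : ∀ i : Fin N,
      (Q * K + Q * (∑ j, Φ j (y j)) - Q * Φ i (y i) + ∑ b, Φ i b) - (K + ∑ j, Φ j (y j))
      = ((Q - 1) * K + (Q - 1) * (∑ j, Φ j (y j))) + ((∑ b, Φ i b) - Q * Φ i (y i)) :=
    fun i => by ring
  rw [Finset.sum_congr rfl fun i _ => houter i, Finset.sum_add_distrib, Finset.sum_const,
    Finset.sum_sub_distrib, ← Finset.mul_sum]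
  simp only [Finset.card_univ, Fintype.card_fin, nsmul_eq_mul]
  ring

/-- A function whose neighbor-sums equal `deg · h` is constant (max principle). -/
lemma eig_top_const {N : ℕ} (h : (Fin N → 𝒜) → ℝ)
    (H : ∀ y, nbrSum N h y = (((Fintype.card 𝒜 : ℝ) - 1) * N) * h y) :
    ∀ y z, h y = h z := by
  intro y z
  set Q : ℝ := (Fintype.card 𝒜 : ℝ) with hQ
  obtain ⟨y₀, -, hmax⟩ := Finset.exists_max_image Finset.univ h ⟨y, Finset.mem_univ y⟩
  suffices H2 : ∀ w, h w = h y₀ by rw [H2 y, H2 z]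
  have hconst : ∀ (a : 𝒜) (c : ℝ), (∑ b : 𝒜, if b = a then 0 else c) = (Q - 1) * c := by
    intro a c
    rw [sum_ite_eq_sub a (fun _ => c) 0, Finset.sum_const]
    simp only [Finset.card_univ, nsmul_eq_mul]
    try ring
  have step : ∀ w, h w = h y₀ → ∀ i b, h (Function.update w i b) = h y₀ := by
    intro w hw i b
    by_cases hb : b = w i
    · subst hb; rw [Function.update_eq_self]; exact hw
    have hsum : (∑ i : Fin N, ∑ b : 𝒜, if b = w i then 0 else h (Function.update w i b))
        = ∑ i : Fin N, ∑ b : 𝒜, ((if b = w i then 0 else h y₀) : ℝ) := by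
      have r1 : (∑ i : Fin N, ∑ b : 𝒜, ((if b = w i then 0 else h y₀) : ℝ))
          = (Q - 1) * N * h y₀ := by
        rw [Finset.sum_congr rfl fun i _ => hconst (w i) (h y₀), Finset.sum_const]
        simp only [Finset.card_univ, Fintype.card_fin, nsmul_eq_mul]; ring
      have r2 := H w
      unfold nbrSum at r2
      rw [r2, r1, hw]; try ring
    have hle : ∀ i ∈ Finset.univ, ∀ b ∈ Finset.univ,
        (if b = w i then (0:ℝ) else h (Function.update w i b)) ≤
          (if b = w i then 0 else h y₀) := by
      intro i _ b _
      by_cases hb2 : b = w i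
      · simp [hb2]
      · simp only [hb2, if_false]; exact hmax _ (Finset.mem_univ _)
    have houter := (Finset.sum_eq_sum_iff_of_le
      (fun i _ => Finset.sum_le_sum (fun b hb2 => hle i (Finset.mem_univ i) b hb2))).1 hsum
      i (Finset.mem_univ i)
    have hinner := (Finset.sum_eq_sum_iff_of_le (hle i (Finset.mem_univ i))).1 houter
      b (Finset.mem_univ b)
    rw [if_neg hb] at hinner
    rw [if_neg hb] at hinner
    exact hinner
  have conn : ∀ k, ∀ w : Fin N → 𝒜, hammingDist y₀ w ≤ k → h w = h y₀ := by
    intro k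
    induction k with
    | zero =>
      intro w hw
      rw [Nat.le_zero, hammingDist_eq_zero] at hw
      rw [← hw]
    | succ k ih =>
      intro w hw
      by_cases h0 : hammingDist y₀ w = 0
      · rw [hammingDist_eq_zero] at h0; rw [← h0]
      · have hex : ∃ i, y₀ i ≠ w i := by
          by_contra hc
          push_neg at hc
          exact h0 (hammingDist_eq_zero.2 (funext fun i => hc i))
        obtain ⟨i, hi⟩ := hex
        set w' := Function.update w i (y₀ i) with hw'
        have hsub : Finset.filter (fun j => y₀ j ≠ w' j) Finset.univ ⊆
            (Finset.filter (fun j => y₀ j ≠ w j) Finset.univ).erase i := by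
          intro j hj
          simp only [Finset.mem_filter, Finset.mem_univ, true_and] at hj
          by_cases hji : j = i
          · exfalso; subst hji; rw [hw', Function.update_self] at hj; exact hj rfl
          · rw [hw', Function.update_of_ne hji] at hj
            exact Finset.mem_erase.2 ⟨hji, by simp [hj]⟩
        have hcard : hammingDist y₀ w' ≤ k := by
          have h1 : hammingDist y₀ w' ≤
              ((Finset.filter (fun j => y₀ j ≠ w j) Finset.univ).erase i).card :=
            Finset.card_le_card hsub
          have hi' : i ∈ Finset.filter (fun j => y₀ j ≠ w j) Finset.univ := by simp [hi]
          rw [Finset.card_erase_of_mem hi'] at h1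
          have : (Finset.filter (fun j => y₀ j ≠ w j) Finset.univ).card ≤ k + 1 := hw
          omega
        have hw'' : h w' = h y₀ := ih w' hcard
        have hwr : w = Function.update w' i (w i) := by
          rw [hw', Function.update_idem, Function.update_eq_self]
        rw [hwr]
        exact step w' hw'' i (w i)
  intro w
  exact conn (hammingDist y₀ w) w le_rfl

/-- Splitting the neighbor sum in `H(N+1,q)` at a point `snoc y α`. -/
lemma nbrSum_snoc {N : ℕ} (h : (Fin (N + 1) → 𝒜) → ℝ) (y : Fin N → 𝒜) (α : 𝒜) :
    nbrSum (N + 1) h (Fin.snoc y α)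
      = nbrSum N (fun z => h (Fin.snoc z α)) y
        + ∑ b, (if b = α then 0 else h (Fin.snoc y b)) := by
  unfold nbrSum
  rw [Fin.sum_univ_castSucc]
  congr 1
  · refine Finset.sum_congr rfl fun i _ => Finset.sum_congr rfl fun b _ => ?_
    rw [Fin.snoc_castSucc, ← Fin.snoc_update]
  · refine Finset.sum_congr rfl fun b _ => ?_
    rw [Fin.snoc_last, Fin.update_snoc_last]

/-- Structure of `λ₁`-eigenfunctions of `H(N,q)`: sums of one-coordinate functions. -/
lemma lam1_structure [Nonempty 𝒜] :
    ∀ (N : ℕ) (h : (Fin N → 𝒜) → ℝ),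
      (∀ y, nbrSum N h y
          = (((Fintype.card 𝒜 : ℝ) - 1) * N - (Fintype.card 𝒜 : ℝ)) * h y) →
      ∃ σ : Fin N → 𝒜 → ℝ, ∀ y, h y = ∑ i, σ i (y i) := by
  have hQ0 : (0 : ℝ) < (Fintype.card 𝒜 : ℝ) := by
    have := Fintype.card_pos (α := 𝒜)
    exact_mod_cast this
  set Q : ℝ := (Fintype.card 𝒜 : ℝ)
  intro N
  induction N with
  | zero =>
    intro h H
    refine ⟨fun i _ => 0, fun y => ?_⟩
    have := H y
    unfold nbrSum at this
    simp only [Finset.univ_eq_empty, Finset.sum_empty] at this ⊢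
    have : Q * h y = 0 := by
      rw [Nat.cast_zero] at this
      nlinarith [this]
    have hy : h y = 0 := by
      rcases mul_eq_zero.1 this with h' | h'
      · exact absurd h' (ne_of_gt hQ0)
      · exact h'
    rw [hy]
  | succ N ih =>
    intro h H
    set T : (Fin N → 𝒜) → ℝ := fun y => ∑ a, h (Fin.snoc y a) with hT
    have key : ∀ (α : 𝒜) (y : Fin N → 𝒜),
        nbrSum N (fun z => h (Fin.snoc z α)) y
          = ((Q - 1) * (N + 1) - Q + 1) * h (Fin.snoc y α) - T y := by
      intro α y
      have h1 := H (Fin.snoc y α)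
      rw [nbrSum_snoc] at h1
      have h2 : (∑ b, if b = α then (0:ℝ) else h (Fin.snoc y b)) = T y - h (Fin.snoc y α) := by
        rw [sum_ite_eq_sub α (fun b => h (Fin.snoc y b)) 0, hT]
        ring
      rw [h2] at h1
      have : (Q - 1) * (↑(N + 1)) = (Q - 1) * ((N : ℝ) + 1) := by push_cast; ring
      rw [this] at h1
      linarith [h1]
    -- differences of sections are top-eigenfunctions, hence constant
    have diffconst : ∀ (a b : 𝒜) (y z : Fin N → 𝒜),
        h (Fin.snoc y a) - h (Fin.snoc y b) = h (Fin.snoc z a) - h (Fin.snoc z b) := by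
      intro a b
      refine eig_top_const (fun z => h (Fin.snoc z a) - h (Fin.snoc z b)) fun y => ?_
      rw [nbrSum_sub, key a y, key b y]
      ring
    -- T is a λ₁-eigenfunction in dimension N
    have hTeig : ∀ y, nbrSum N T y = ((Q - 1) * N - Q) * T y := by
      intro y
      have : nbrSum N T y = ∑ a, nbrSum N (fun z => h (Fin.snoc z a)) y := by
        rw [hT]
        exact nbrSum_finsum Finset.univ (fun a z => h (Fin.snoc z a)) y
      rw [this, Finset.sum_congr rfl fun a _ => key a y, Finset.sum_sub_distrib,
        ← Finset.mul_sum, Finset.sum_const]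
      have hTy : (∑ a, h (Fin.snoc y a)) = T y := rfl
      rw [hTy]
      simp only [Finset.card_univ, nsmul_eq_mul]
      ring
    obtain ⟨σ, hσ⟩ := ih T hTeig
    set y₀ : Fin N → 𝒜 := Classical.arbitrary _ with hy₀
    set c : 𝒜 → 𝒜 → ℝ := fun a b => h (Fin.snoc y₀ a) - h (Fin.snoc y₀ b) with hc
    have hsection : ∀ (a : 𝒜) (y : Fin N → 𝒜),
        Q * h (Fin.snoc y a) = (∑ b, c a b) + T y := by
      intro a y
      have : ∀ b : 𝒜, h (Fin.snoc y a) - h (Fin.snoc y b) = c a b := fun b =>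
        (diffconst a b y y₀).trans rfl
      have h1 : (∑ b, (h (Fin.snoc y a) - h (Fin.snoc y b))) = ∑ b, c a b :=
        Finset.sum_congr rfl fun b _ => this b
      rw [← h1, Finset.sum_sub_distrib, Finset.sum_const, hT]
      simp only [Finset.card_univ, nsmul_eq_mul]
      ring
    refine ⟨Fin.snoc (fun i b => σ i b / Q) (fun a => (∑ b, c a b) / Q), fun x => ?_⟩
    have hQne : Q ≠ 0 := ne_of_gt hQ0
    have hs := hsection (x (Fin.last N)) (Fin.init x)
    rw [hσ (Fin.init x)] at hs
    have hinit : (∑ i, σ i (Fin.init x i)) = ∑ i, σ i (x (Fin.castSucc i)) := rfl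
    rw [hinit] at hs
    rw [Fin.sum_univ_castSucc]
    have e1 : ∀ i : Fin N,
        (Fin.snoc (fun i b => σ i b / Q) (fun a => (∑ b, c a b) / Q) : Fin (N+1) → 𝒜 → ℝ)
          (Fin.castSucc i) (x (Fin.castSucc i)) = σ i (x (Fin.castSucc i)) / Q := by
      intro i; rw [Fin.snoc_castSucc]
    have e2 : (Fin.snoc (fun i b => σ i b / Q) (fun a => (∑ b, c a b) / Q) : Fin (N+1) → 𝒜 → ℝ)
        (Fin.last N) (x (Fin.last N)) = (∑ b, c (x (Fin.last N)) b) / Q := by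
      rw [Fin.snoc_last]
    rw [Finset.sum_congr rfl fun i _ => e1 i, e2]
    rw [Fin.snoc_init_self] at hs
    rw [← Finset.sum_div]
    field_simp
    linarith [hs]

end Aux


/-- `(C, Cᶜ)` is an equitable 2-partition of the graph `G` (both cells nonempty) with
quotient matrix `S`: every vertex of `C` has exactly `S 0 0` neighbors in `C` and `S 0 1`
neighbors in `Cᶜ`, and every vertex of `Cᶜ` has exactly `S 1 0` neighbors in `C` and
`S 1 1` neighbors in `Cᶜ`. -/
def IsEquitable2 {V : Type*} (G : SimpleGraph V) (C : Set V)
    (S : Matrix (Fin 2) (Fin 2) ℤ) : Prop :=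
  C.Nonempty ∧ Cᶜ.Nonempty ∧
    (∀ x ∈ C, ((G.neighborSet x ∩ C).ncard : ℤ) = S 0 0 ∧
      ((G.neighborSet x ∩ Cᶜ).ncard : ℤ) = S 0 1) ∧
    (∀ x ∈ Cᶜ, ((G.neighborSet x ∩ C).ncard : ℤ) = S 1 0 ∧
      ((G.neighborSet x ∩ Cᶜ).ncard : ℤ) = S 1 1)

/-- The Hamming graph `H(n,q)` on the vertex set `𝒜ⁿ` (where `|𝒜| = q`): two vertices are
adjacent iff they differ in exactly one coordinate. -/
def hammingGraph (n : ℕ) (𝒜 : Type*) [DecidableEq 𝒜] : SimpleGraph (Fin n → 𝒜) where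
  Adj x y := hammingDist x y = 1
  symm := ⟨fun x y h => by show hammingDist y x = 1; rw [hammingDist_comm]; exact h⟩
  loopless := ⟨fun x h => by simp [hammingDist_self] at h⟩

/-- A coordinate `i` is essential for `f` if there exist two inputs differing only in
coordinate `i` at which `f` takes different values. -/
def EssentialCoord {m : ℕ} {𝒜 : Type*} (f : (Fin m → 𝒜) → ℝ) (i : Fin m) : Prop :=
  ∃ x y : Fin m → 𝒜, (∀ j, j ≠ i → x j = y j) ∧ f x ≠ f y

/-- ambient graph `H(n+1, q)`, `n + 1 ≥ 2`: if the sets of essential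
coordinates of the restrictions `(χ_C)_{n+1}^α : y ↦ χ_C (snoc y α)` are not all equal,
then every maximal clique of `H(n+1,q)` consisting of pairwise `(n+1)`-adjacent vertices
(vertices varying in the last coordinate) contains exactly `S₂₁/2` vertices of `C` and
`S₁₂/2` vertices of `Cᶜ`. -/
theorem stmt17 {𝒜 : Type*} [Fintype 𝒜] [DecidableEq 𝒜] (q n : ℕ)
    (hq : Fintype.card 𝒜 = q) (hq2 : 2 ≤ q) (hn : 1 ≤ n)
    (C : Set (Fin (n + 1) → 𝒜)) (S : Matrix (Fin 2) (Fin 2) ℤ)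
    (hS : IsEquitable2 (hammingGraph (n + 1) 𝒜) C S)
    (heig : S 0 0 - S 1 0 = ((q : ℤ) - 1) * (n + 1) - 2 * q)
    (hdiff : ∃ α β : 𝒜,
      {i : Fin n | EssentialCoord
          (fun y : Fin n → 𝒜 => C.indicator (fun _ => (1 : ℝ)) (Fin.snoc y α)) i} ≠
      {i : Fin n | EssentialCoord
          (fun y : Fin n → 𝒜 => C.indicator (fun _ => (1 : ℝ)) (Fin.snoc y β)) i}) :
    ∀ x : Fin (n + 1) → 𝒜,
      2 * (({γ : 𝒜 | Function.update x (Fin.last n) γ ∈ C}).ncard : ℤ) = S 1 0 ∧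
      2 * (({γ : 𝒜 | Function.update x (Fin.last n) γ ∉ C}).ncard : ℤ) = S 0 1 := by
  classical
  have hNE : Nonempty 𝒜 := Fintype.card_pos_iff.mp (by omega)
  set Q : ℝ := (Fintype.card 𝒜 : ℝ) with hQdef
  have hQq : Q = (q : ℝ) := by rw [hQdef, hq]
  have hQ0 : Q ≠ 0 := by
    rw [hQq]
    exact_mod_cast (by omega : q ≠ 0)
  set f : (Fin (n + 1) → 𝒜) → ℝ := C.indicator (fun _ => (1 : ℝ)) with hf
  obtain ⟨⟨x₀, hx₀⟩, ⟨x₁, hx₁⟩, hCmem, hCcmem⟩ := hS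
  have hf01 : ∀ z, f z = 0 ∨ f z = 1 := by
    intro z
    by_cases hz : z ∈ C
    · right; rw [hf, Set.indicator_of_mem hz]
    · left; rw [hf, Set.indicator_of_notMem hz]
  have hNS : ∀ z : Fin (n + 1) → 𝒜, (hammingGraph (n + 1) 𝒜).neighborSet z
      = ↑(Finset.univ.filter (fun w => hammingDist z w = 1)) := by
    intro z; ext w
    simp only [SimpleGraph.mem_neighborSet, Finset.coe_filter, Finset.mem_univ, true_and,
      Set.mem_setOf_eq]
    exact Iff.rfl
  -- nbrSum of f counts the neighbors inside C
  have indsum : ∀ z : Fin (n + 1) → 𝒜,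
      nbrSum (n + 1) f z = ((((hammingGraph (n + 1) 𝒜).neighborSet z ∩ C).ncard : ℕ) : ℝ) := by
    intro z
    rw [nbrSum_eq_nbhd]
    have h1 : (∑ w ∈ Finset.univ.filter (fun w => hammingDist z w = 1), f w)
        = (((Finset.univ.filter (fun w => hammingDist z w = 1)).filter (· ∈ C)).card : ℝ) := by
      rw [Finset.sum_congr rfl fun w _ => (Set.indicator_apply C _ w : f w = _),
        Finset.sum_boole]
    have h2 : (hammingGraph (n + 1) 𝒜).neighborSet z ∩ C
        = ↑((Finset.univ.filter (fun w => hammingDist z w = 1)).filter (· ∈ C)) := by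
      rw [hNS z]; ext w
      simp only [Set.mem_inter_iff, Finset.coe_filter, Set.mem_setOf_eq, Finset.mem_filter,
        Finset.mem_univ, true_and]
      try tauto
    rw [h1, h2, Set.ncard_coe_finset]
  -- pointwise equitability equation
  have M1 : ∀ z, nbrSum (n + 1) f z
      = ((S 0 0 : ℝ) - (S 1 0 : ℝ)) * f z + (S 1 0 : ℝ) := by
    intro z
    by_cases hz : z ∈ C
    · have h00 := (hCmem z hz).1
      have hfz : f z = 1 := by rw [hf, Set.indicator_of_mem hz]
      have : ((((hammingGraph (n + 1) 𝒜).neighborSet z ∩ C).ncard : ℕ) : ℝ) = (S 0 0 : ℝ) := by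
        exact_mod_cast h00
      rw [indsum z, this, hfz]; ring
    · have h10 := (hCcmem z hz).1
      have hfz : f z = 0 := by rw [hf, Set.indicator_of_notMem hz]
      have : ((((hammingGraph (n + 1) 𝒜).neighborSet z ∩ C).ncard : ℕ) : ℝ) = (S 1 0 : ℝ) := by
        exact_mod_cast h10
      rw [indsum z, this, hfz]; ring
  -- degree of the Hamming graph
  have deg1 : ∀ z : Fin (n + 1) → 𝒜,
      nbrSum (n + 1) (fun _ => (1 : ℝ)) z = (Q - 1) * (n + 1) := by
    intro z
    have h2 := nbrSum_affine (𝒜 := 𝒜) (N := n + 1) 1 (fun _ _ => (0:ℝ)) z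
    have h1 : nbrSum (n + 1) (fun _ => (1 : ℝ)) z
        = nbrSum (n + 1) (fun w => 1 + ∑ j : Fin (n + 1), (fun _ _ => (0:ℝ)) j (w j)) z :=
      nbrSum_congr (fun w => by simp) z
    rw [h1, h2, ← hQdef]
    simp only [Finset.sum_const_zero, mul_zero, add_zero, mul_one]
    push_cast
    ring
  have degcard : ∀ z : Fin (n + 1) → 𝒜,
      ((((hammingGraph (n + 1) 𝒜).neighborSet z).ncard : ℕ) : ℝ) = (Q - 1) * (n + 1) := by
    intro z
    rw [hNS z, Set.ncard_coe_finset]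
    have h1 := nbrSum_eq_nbhd (fun _ => (1 : ℝ)) z
    rw [deg1 z] at h1
    calc ((#(Finset.univ.filter (fun w => hammingDist z w = 1)) : ℕ) : ℝ)
        = ∑ _w ∈ Finset.univ.filter (fun w => hammingDist z w = 1), (1:ℝ) := by
          rw [Finset.sum_const, nsmul_eq_mul, mul_one]
      _ = (Q - 1) * (n + 1) := h1.symm
  have hdeg : (S 0 0 : ℝ) + (S 0 1 : ℝ) = (Q - 1) * (n + 1) := by
    have h00 := (hCmem x₀ hx₀).1
    have h01 := (hCmem x₀ hx₀).2
    have hsplit := Set.ncard_inter_add_ncard_diff_eq_ncard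
      ((hammingGraph (n + 1) 𝒜).neighborSet x₀) C (Set.toFinite _)
    rw [Set.diff_eq] at hsplit
    have hcast : ((S 0 0 : ℝ)) + (S 0 1 : ℝ)
        = ((((hammingGraph (n + 1) 𝒜).neighborSet x₀).ncard : ℕ) : ℝ) := by
      rw [← degcard x₀] at *
      push_cast [← h00, ← h01, ← hsplit]
      ring
    rw [hcast, degcard x₀]
  -- restriction identities
  set F : (Fin n → 𝒜) → ℝ := fun y => ∑ γ, f (Fin.snoc y γ) with hF
  have M3 : ∀ (α : 𝒜) (y : Fin n → 𝒜),
      nbrSum n (fun z => f (Fin.snoc z α)) y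
        = ((S 0 0 : ℝ) - (S 1 0 : ℝ) + 1) * f (Fin.snoc y α) - F y + (S 1 0 : ℝ) := by
    intro α y
    have h1 := M1 (Fin.snoc y α)
    rw [nbrSum_snoc] at h1
    have h2 : (∑ b, if b = α then (0 : ℝ) else f (Fin.snoc y b))
        = F y - f (Fin.snoc y α) := by
      rw [sum_ite_eq_sub α (fun b => f (Fin.snoc y b)) 0, hF]
      ring
    rw [h2] at h1
    linarith
  have hθR : (S 0 0 : ℝ) - (S 1 0 : ℝ) + 1 = (Q - 1) * (n : ℝ) - Q := by
    have h := congrArg (fun z : ℤ => (z : ℝ)) heig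
    push_cast at h
    rw [hQq]
    linear_combination h
  have M4 : ∀ α β : 𝒜, ∃ ρ : Fin n → 𝒜 → ℝ, ∀ y,
      f (Fin.snoc y α) - f (Fin.snoc y β) = ∑ j, ρ j (y j) := by
    intro α β
    refine lam1_structure n (fun y => f (Fin.snoc y α) - f (Fin.snoc y β)) fun y => ?_
    rw [nbrSum_sub, M3 α y, M3 β y]
    rw [← hQdef]
    linear_combination (f (Fin.snoc y α) - f (Fin.snoc y β)) * hθR
  -- core combinatorial lemma
  have core : ∀ (α β : 𝒜) (i : Fin n),
      EssentialCoord (fun y => f (Fin.snoc y α)) i →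
      ¬ EssentialCoord (fun y => f (Fin.snoc y β)) i →
      ∃ (K : ℝ) (τ : Fin n → 𝒜 → ℝ), ∀ y, f (Fin.snoc y β) = K + ∑ j, τ j (y j) := by
    intro α β i hEα hEβ
    obtain ⟨σ, hσ⟩ := M4 α β
    have hβc : ∀ (w : Fin n → 𝒜) (b : 𝒜),
        f (Fin.snoc (Function.update w i b) β) = f (Fin.snoc w β) := by
      intro w b
      by_contra hne
      exact hEβ ⟨Function.update w i b, w, fun j hj => Function.update_of_ne hj _ _, hne⟩
    obtain ⟨u, v, huv, hne⟩ := hEα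
    have hβuv : f (Fin.snoc u β) = f (Fin.snoc v β) := by
      by_contra hne2; exact hEβ ⟨u, v, huv, hne2⟩
    have hsum_uv : ∀ w w' : Fin n → 𝒜, (∀ j, j ≠ i → w j = w' j) →
        (∑ j, σ j (w j)) - (∑ j, σ j (w' j)) = σ i (w i) - σ i (w' i) := by
      intro w w' hww
      rw [← Finset.sum_sub_distrib]
      rw [Finset.sum_eq_single i (fun j _ hj => by rw [hww j hj]; ring)
        (fun hi => absurd (Finset.mem_univ i) hi)]
    set Δ : ℝ := σ i (u i) - σ i (v i) with hΔ
    have h1 : f (Fin.snoc u α) - f (Fin.snoc v α) = Δ := by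
      have e1 := hσ u
      have e2 := hσ v
      have e3 := hsum_uv u v huv
      rw [hΔ]
      linarith
    have hΔne : Δ ≠ 0 := by
      intro h0; rw [h0] at h1; exact hne (by linarith)
    have hkey : ∀ y : Fin n → 𝒜,
        f (Fin.snoc (Function.update y i (u i)) α)
          - f (Fin.snoc (Function.update y i (v i)) α) = Δ := by
      intro y
      have e1 := hσ (Function.update y i (u i))
      have e2 := hσ (Function.update y i (v i))
      have e3 := hsum_uv (Function.update y i (u i)) (Function.update y i (v i))
        (fun j hj => by rw [Function.update_of_ne hj, Function.update_of_ne hj])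
      simp only [Function.update_self] at e3
      have e6 : f (Fin.snoc (Function.update y i (u i)) β)
          = f (Fin.snoc (Function.update y i (v i)) β) := by
        rw [hβc y (u i), hβc y (v i)]
      rw [hΔ]
      linarith
    have hzero : ∃ b₀ : 𝒜, ∀ y : Fin n → 𝒜, f (Fin.snoc (Function.update y i b₀) α) = 0 := by
      have y₀ : Fin n → 𝒜 := Classical.arbitrary _
      rcases hf01 (Fin.snoc (Function.update y₀ i (u i)) α) with e1 | e1 <;>
        rcases hf01 (Fin.snoc (Function.update y₀ i (v i)) α) with e2 | e2
      · exfalso; have := hkey y₀; rw [e1, e2] at this; exact hΔne (by linarith)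
      · -- Δ = -1, so the (u i) side is always 0
        refine ⟨u i, fun y => ?_⟩
        have hΔval : Δ = -1 := by have := hkey y₀; rw [e1, e2] at this; linarith
        have hk := hkey y
        rw [hΔval] at hk
        rcases hf01 (Fin.snoc (Function.update y i (u i)) α) with e3 | e3
        · exact e3
        · exfalso
          rcases hf01 (Fin.snoc (Function.update y i (v i)) α) with e4 | e4 <;>
            rw [e3, e4] at hk <;> norm_num at hk
      · -- Δ = 1, so the (v i) side is always 0
        refine ⟨v i, fun y => ?_⟩
        have hΔval : Δ = 1 := by have := hkey y₀; rw [e1, e2] at this; linarith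
        have hk := hkey y
        rw [hΔval] at hk
        rcases hf01 (Fin.snoc (Function.update y i (v i)) α) with e3 | e3
        · exact e3
        · exfalso
          rcases hf01 (Fin.snoc (Function.update y i (u i)) α) with e4 | e4 <;>
            rw [e3, e4] at hk <;> norm_num at hk
      · exfalso; have := hkey y₀; rw [e1, e2] at this; exact hΔne (by linarith)
    obtain ⟨b₀, hb₀⟩ := hzero
    refine ⟨-σ i b₀, fun j t => (if j = i then σ j t else 0) - σ j t, fun y => ?_⟩
    have e1 : f (Fin.snoc y β) = f (Fin.snoc (Function.update y i b₀) β) := (hβc y b₀).symm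
    have e2 := hσ (Function.update y i b₀)
    rw [hb₀ y] at e2
    have e3 : (∑ j, σ j (Function.update y i b₀ j))
        = σ i b₀ - σ i (y i) + ∑ j, σ j (y j) := by
      have hptj : ∀ j : Fin n, σ j (Function.update y i b₀ j)
          = if j = i then σ i b₀ else σ j (y j) := by
        intro j
        by_cases hj : j = i
        · subst hj; rw [Function.update_self]; simp
        · rw [Function.update_of_ne hj]; simp [hj]
      rw [Finset.sum_congr rfl fun j _ => hptj j,
        sum_ite_eq_sub i (fun j => σ j (y j)) (σ i b₀)]
    have e4 : (∑ j, ((if j = i then σ j (y j) else 0) - σ j (y j)))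
        = σ i (y i) - ∑ j, σ j (y j) := by
      rw [Finset.sum_sub_distrib, Finset.sum_ite_eq' Finset.univ i (fun j => σ j (y j))]
      simp
    rw [e4, e1]
    rw [e3] at e2
    linarith
  -- get a section which is affine
  have hbase : ∃ (δ : 𝒜) (K : ℝ) (τ : Fin n → 𝒜 → ℝ),
      ∀ y, f (Fin.snoc y δ) = K + ∑ j, τ j (y j) := by
    obtain ⟨α, β, hαβ⟩ := hdiff
    have hex : ∃ i : Fin n,
        ¬ (EssentialCoord (fun y => f (Fin.snoc y α)) i ↔
           EssentialCoord (fun y => f (Fin.snoc y β)) i) := by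
      by_contra hc
      push_neg at hc
      exact hαβ (Set.ext fun i => by
        simp only [Set.mem_setOf_eq]
        exact hc i)
    obtain ⟨i, hi⟩ := hex
    by_cases hEα : EssentialCoord (fun y => f (Fin.snoc y α)) i
    · have hEβ : ¬ EssentialCoord (fun y => f (Fin.snoc y β)) i := fun h => hi ⟨fun _ => h, fun _ => hEα⟩
      obtain ⟨K, τ, hKτ⟩ := core α β i hEα hEβ
      exact ⟨β, K, τ, hKτ⟩
    · have hEβ : EssentialCoord (fun y => f (Fin.snoc y β)) i := by
        by_contra hEβ
        exact hi ⟨fun h => absurd h hEα, fun h => absurd h hEβ⟩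
      obtain ⟨K, τ, hKτ⟩ := core β α i hEβ hEα
      exact ⟨α, K, τ, hKτ⟩
  obtain ⟨δ, K, τ, hδ⟩ := hbase
  choose ρ hρ using fun γ : 𝒜 => M4 γ δ
  set Φ : Fin n → 𝒜 → ℝ := fun j t => Q * τ j t + ∑ γ, ρ γ j t with hΦ
  have hFform : ∀ y, F y = Q * K + ∑ j, Φ j (y j) := by
    intro y
    have h1 : ∀ γ : 𝒜, f (Fin.snoc y γ) = (K + ∑ j, τ j (y j)) + ∑ j, ρ γ j (y j) := by
      intro γ
      have e1 := hρ γ y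
      have e2 := hδ y
      linarith
    have hFy : F y = ∑ γ, f (Fin.snoc y γ) := rfl
    rw [hFy]
    rw [Finset.sum_congr rfl fun γ _ => h1 γ, Finset.sum_add_distrib, Finset.sum_const,
      Finset.sum_comm]
    have h2 : (∑ j, Φ j (y j)) = ∑ j, (Q * τ j (y j) + ∑ γ, ρ γ j (y j)) := rfl
    rw [h2, Finset.sum_add_distrib, ← Finset.mul_sum]
    simp only [Finset.card_univ, nsmul_eq_mul]
    ring
  have M7 : ∀ y, nbrSum n F y = ((Q - 1) * (n : ℝ) - 2 * Q) * F y + Q * (S 1 0 : ℝ) := by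
    intro y
    have h1 : nbrSum n F y = ∑ γ, nbrSum n (fun z => f (Fin.snoc z γ)) y :=
      nbrSum_finsum Finset.univ (fun γ z => f (Fin.snoc z γ)) y
    rw [h1, Finset.sum_congr rfl fun γ _ => M3 γ y]
    have h2 : (∑ γ : 𝒜, (((S 0 0 : ℝ) - (S 1 0 : ℝ) + 1) * f (Fin.snoc y γ)
          - F y + (S 1 0 : ℝ)))
        = ((S 0 0 : ℝ) - (S 1 0 : ℝ) + 1) * F y - Q * F y + Q * (S 1 0 : ℝ) := by
      rw [Finset.sum_add_distrib, Finset.sum_sub_distrib, ← Finset.mul_sum, Finset.sum_const,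
        Finset.sum_const]
      have h3 : (∑ γ, f (Fin.snoc y γ)) = F y := rfl
      rw [h3]
      simp only [Finset.card_univ, nsmul_eq_mul]
      try ring
    rw [h2]
    linear_combination (F y) * hθR
  -- F is constant
  have hQF : ∀ y, Q * F y = Q * (S 1 0 : ℝ) - (Q - 1) * (n : ℝ) * (Q * K)
      + ((Q - 1) * (n : ℝ) - Q) * (Q * K) - ∑ j, ∑ b, Φ j b := by
    intro y
    have a1 : nbrSum n F y
        = (Q - 1) * (n : ℝ) * (Q * K) + ((Q - 1) * (n : ℝ) - Q) * (∑ j, Φ j (y j))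
          + ∑ j, ∑ b, Φ j b := by
      rw [nbrSum_congr hFform y, nbrSum_affine, ← hQdef]
    have eq1 := (M7 y).symm.trans a1
    linear_combination (-1 : ℝ) * eq1 + ((Q - 1) * (n : ℝ) - Q) * (hFform y)
  have hFconst : ∀ y z, F y = F z := by
    intro y z
    have := (hQF y).trans (hQF z).symm
    exact mul_left_cancel₀ hQ0 this
  have hFval : ∀ y, 2 * F y = (S 1 0 : ℝ) := by
    intro y
    have a1 : nbrSum n F y = (Q - 1) * (n : ℝ) * F y := by
      have hcg : ∀ z, F z = F y + ∑ j : Fin n, (fun _ _ => (0:ℝ)) j (z j) := by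
        intro z; rw [hFconst z y]; simp
      have ha := nbrSum_affine (𝒜 := 𝒜) (N := n) (F y) (fun _ _ => (0:ℝ)) y
      rw [nbrSum_congr hcg y, ha, ← hQdef]
      simp
    have e1 := M7 y
    rw [a1] at e1
    have h2 : Q * (2 * F y) = Q * (S 1 0 : ℝ) := by linear_combination e1
    exact mul_left_cancel₀ hQ0 h2
  -- conclusion
  intro x
  have hsn : ∀ γ : 𝒜, Function.update x (Fin.last n) γ = Fin.snoc (Fin.init x) γ := by
    intro γ
    conv_lhs => rw [show x = Fin.snoc (Fin.init x) (x (Fin.last n)) from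
      (Fin.snoc_init_self x).symm]
    rw [Fin.update_snoc_last]
  have hcount : ((({γ : 𝒜 | Function.update x (Fin.last n) γ ∈ C}).ncard : ℕ) : ℝ)
      = F (Fin.init x) := by
    have hset : {γ : 𝒜 | Function.update x (Fin.last n) γ ∈ C}
        = ↑(Finset.univ.filter (fun γ => Fin.snoc (Fin.init x) γ ∈ C)) := by
      ext γ
      simp only [Set.mem_setOf_eq, Finset.coe_filter, Finset.mem_univ, true_and, hsn γ]
    rw [hset, Set.ncard_coe_finset]
    have hFx : F (Fin.init x) = ∑ γ, f (Fin.snoc (Fin.init x) γ) := rfl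
    rw [hFx]
    rw [Finset.sum_congr rfl fun γ _ =>
      (Set.indicator_apply C _ (Fin.snoc (Fin.init x) γ) : f (Fin.snoc (Fin.init x) γ) = _),
      Finset.sum_boole]
  have main1 : 2 * (({γ : 𝒜 | Function.update x (Fin.last n) γ ∈ C}).ncard : ℤ) = S 1 0 := by
    have hR : (2 * (({γ : 𝒜 | Function.update x (Fin.last n) γ ∈ C}).ncard : ℤ) : ℝ)
        = ((S 1 0 : ℤ) : ℝ) := by
      push_cast
      rw [hcount]
      exact hFval (Fin.init x)
    exact_mod_cast hR
  refine ⟨main1, ?_⟩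
  have hcompl : {γ : 𝒜 | Function.update x (Fin.last n) γ ∉ C}
      = {γ : 𝒜 | Function.update x (Fin.last n) γ ∈ C}ᶜ := rfl
  have hsum := Set.ncard_add_ncard_compl {γ : 𝒜 | Function.update x (Fin.last n) γ ∈ C}
  have hNatCard : Nat.card 𝒜 = q := by rw [Nat.card_eq_fintype_card, hq]
  have hdegZ : S 0 0 + S 0 1 = ((q : ℤ) - 1) * (n + 1) := by
    have : (S 0 0 : ℝ) + (S 0 1 : ℝ) = ((q : ℝ) - 1) * ((n : ℝ) + 1) := by
      rw [hdeg, hQq]; try (push_cast; ring)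
    exact_mod_cast this
  rw [hcompl]
  have hsub : ({γ : 𝒜 | Function.update x (Fin.last n) γ ∈ C}ᶜ.ncard : ℤ)
      = (q : ℤ) - ({γ : 𝒜 | Function.update x (Fin.last n) γ ∈ C}.ncard : ℤ) := by
    rw [hNatCard] at hsum
    omega
  rw [hsub]
  omega
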